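/- Motzkin transposition (rational version): Let A ∈ ℚ^{a×d}, B ∈ ℚ^{b×d}, C ∈ ℚ^{c×d}. Exactly one of the following holds: (1) there exists x ∈ ℝ^d with Ax ≫ 0 (all entries strictly positive), Bx ≥ 0 componentwise, and Cx = 0; (2) there exist vectors p ∈ ℤ^a with p ≥ 0 and p ≠ 0, q ∈ ℤ^b with q ≥ 0, and r ∈ ℤ^c such that pᵀA + qᵀB + rᵀC = 0. -/
import Mathlib

open Matrix


theorem sum_trichotomy {ι : Type} [Fintype ι] {M : Type} [AddCommMonoid M]
    (coef : ι → ℚ) (f : ι → M) :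
    ∑ i, f i = (∑ z : {i // coef i = 0}, f z) + ((∑ p : {i // 0 < coef i}, f p)
      + (∑ n : {i // coef i < 0}, f n)) := by
  have hZ : (∑ z : {i // coef i = 0}, f z)
      = ∑ i ∈ Finset.univ.filter (fun i => coef i = 0), f i := by
    refine (Finset.sum_subtype _ (fun x => ?_) f).symm
    simp
  have hP : (∑ p : {i // 0 < coef i}, f p)
      = ∑ i ∈ (Finset.univ.filter (fun i => ¬ coef i = 0)).filter (fun i => 0 < coef i), f i := by
    refine (Finset.sum_subtype _ (fun x => ?_) f).symm
    simp only [Finset.mem_filter, Finset.mem_univ, true_and]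
    exact ⟨fun h => h.2, fun h => ⟨h.ne', h⟩⟩
  have hN : (∑ n : {i // coef i < 0}, f n)
      = ∑ i ∈ (Finset.univ.filter (fun i => ¬ coef i = 0)).filter (fun i => ¬ 0 < coef i), f i := by
    refine (Finset.sum_subtype _ (fun x => ?_) f).symm
    simp only [Finset.mem_filter, Finset.mem_univ, true_and]
    constructor
    · rintro ⟨h1, h2⟩; exact lt_of_le_of_ne (not_lt.mp h2) h1
    · intro h; exact ⟨ne_of_lt h, not_lt.mpr h.le⟩
  rw [hZ, hP, hN,
      Finset.sum_filter_add_sum_filter_not (Finset.univ.filter (fun i => ¬ coef i = 0)) (fun i => 0 < coef i) f]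
  exact (Finset.sum_filter_add_sum_filter_not Finset.univ (fun i => coef i = 0) f).symm

theorem exists_between_bounds {P N : Type} [Fintype P] [Fintype N]
    (av : P → ℚ) (bv : N → ℚ) (sp : P → Bool) (sn : N → Bool)
    (h : ∀ p n, if (sp p || sn n) then av p < bv n else av p ≤ bv n) :
    ∃ t : ℚ, (∀ p, if sp p then av p < t else av p ≤ t) ∧
      (∀ n, if sn n then t < bv n else t ≤ bv n) := by
  by_cases hP : Nonempty P
  · by_cases hN : Nonempty N
    · obtain ⟨p0, -, hp0⟩ := Finset.exists_mem_eq_sup' (Finset.univ_nonempty (α := P)) av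
      obtain ⟨n0, -, hn0⟩ := Finset.exists_mem_eq_inf' (Finset.univ_nonempty (α := N)) bv
      set A := Finset.univ.sup' Finset.univ_nonempty av with hA
      set B := Finset.univ.inf' Finset.univ_nonempty bv with hB
      have hle : ∀ p, av p ≤ A := fun p => Finset.le_sup' av (Finset.mem_univ p)
      have hge : ∀ n, B ≤ bv n := fun n => Finset.inf'_le bv (Finset.mem_univ n)
      have hAB : A ≤ B := by
        have := h p0 n0
        rw [hp0, hn0]
        split at this
        · exact this.le
        · exact this
      rcases lt_or_eq_of_le hAB with hlt | heq
      · refine ⟨(A + B) / 2, fun p => ?_, fun n => ?_⟩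
        · have h1 : av p ≤ A := hle p
          have h2 : A < (A + B)/2 := by linarith
          split <;> linarith
        · have h1 : B ≤ bv n := hge n
          have h2 : (A + B)/2 < B := by linarith
          split <;> linarith
      · refine ⟨A, fun p => ?_, fun n => ?_⟩
        · by_cases hs : sp p = true
          · rw [if_pos hs]
            have := h p n0
            rw [hs] at this
            simp only [Bool.true_or, if_true] at this
            rw [← hn0, ← heq] at this
            exact this
          · rw [if_neg hs]; exact hle p
        · by_cases hs : sn n = true
          · rw [if_pos hs]
            have := h p0 n
            rw [hs] at this
            simp only [Bool.or_true, if_true] at this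
            rw [← hp0] at this
            exact this
          · rw [if_neg hs, heq]; exact hge n
    · -- N empty
      refine ⟨Finset.univ.sup' Finset.univ_nonempty av + 1, fun p => ?_, fun n => (hN ⟨n⟩).elim⟩
      have h1 : av p ≤ Finset.univ.sup' Finset.univ_nonempty av :=
        Finset.le_sup' av (Finset.mem_univ p)
      split <;> linarith
  · by_cases hN : Nonempty N
    · refine ⟨Finset.univ.inf' Finset.univ_nonempty bv - 1, fun p => (hP ⟨p⟩).elim, fun n => ?_⟩
      have h1 : Finset.univ.inf' Finset.univ_nonempty bv ≤ bv n :=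
        Finset.inf'_le bv (Finset.mem_univ n)
      split <;> linarith
    · exact ⟨0, fun p => (hP ⟨p⟩).elim, fun n => (hN ⟨n⟩).elim⟩

theorem motzkin_core : ∀ (d : ℕ) {ι : Type} [Fintype ι] (v : ι → Fin d → ℚ) (s : ι → Bool),
    (∃ x : Fin d → ℚ, ∀ i, if s i then 0 < dotProduct (v i) x
        else 0 ≤ dotProduct (v i) x) ∨
    (∃ w : ι → ℚ, (∀ i, 0 ≤ w i) ∧ (∃ i, s i = true ∧ 0 < w i) ∧ ∑ i, w i • v i = 0) := by
  intro d
  classical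
  induction d with
  | zero =>
    intro ι _ v s
    by_cases hs : ∃ i, s i = true
    · obtain ⟨i0, hi0⟩ := hs
      refine Or.inr ⟨fun j => if j = i0 then 1 else 0, fun j => by positivity, ⟨i0, hi0, by simp⟩, ?_⟩
      funext k
      exact k.elim0
    · refine Or.inl ⟨0, fun i => ?_⟩
      rw [if_neg (fun h => hs ⟨i, h⟩)]
      simp [dotProduct]
  | succ d IH =>
    intro ι _ v s
    set coef : ι → ℚ := fun i => v i (Fin.last d) with hcoef
    set v' : ι → Fin d → ℚ := fun i => v i ∘ Fin.castSucc with hv'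
    -- new index type
    set ι' := {i // coef i = 0} ⊕ ({i // 0 < coef i} × {i // coef i < 0}) with hι'
    set u : ι' → Fin d → ℚ := fun j => Sum.elim (fun z => v' z.1)
      (fun pn => coef pn.1.1 • v' pn.2.1 + (-coef pn.2.1) • v' pn.1.1) j with hu
    set s' : ι' → Bool := fun j => Sum.elim (fun z => s z.1) (fun pn => s pn.1.1 || s pn.2.1) j with hs'
    rcases IH u s' with ⟨x', hx'⟩ | ⟨w', hw0, ⟨j0, hj0s, hj0p⟩, hwsum⟩
    · -- feasible case: extend x' by a new last coordinate
      left
      have hdot : ∀ (i : ι) (t : ℚ),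
          dotProduct (v i) (Fin.snoc x' t) = dotProduct (v' i) x' + coef i * t := by
        intro i t
        simp only [dotProduct, Fin.sum_univ_castSucc, Fin.snoc_castSucc, Fin.snoc_last,
          hv', hcoef, Function.comp]
      set av : {i // 0 < coef i} → ℚ := fun p => -(dotProduct (v' p.1) x') / coef p.1 with hav
      set bv : {i // coef i < 0} → ℚ := fun n => -(dotProduct (v' n.1) x') / coef n.1 with hbv
      have hcmp : ∀ p n, if (s p.1 || s n.1) then av p < bv n else av p ≤ bv n := by
        intro p n
        have hp : (0:ℚ) < coef p.1 := p.2
        have hn : coef n.1 < (0:ℚ) := n.2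
        have hx := hx' (Sum.inr (p, n))
        simp only [hu, hs', Sum.elim_inr, add_dotProduct, smul_dotProduct,
          smul_eq_mul] at hx
        set G := dotProduct (v' p.1) x' with hG
        set H := dotProduct (v' n.1) x' with hH
        by_cases hb : (s p.1 || s n.1) = true
        · rw [if_pos hb]; rw [if_pos hb] at hx
          rw [hav, hbv, div_lt_iff₀ hp, div_mul_eq_mul_div, lt_div_iff_of_neg hn]
          nlinarith
        · rw [if_neg hb]; rw [if_neg hb] at hx
          rw [hav, hbv, div_le_iff₀ hp, div_mul_eq_mul_div, le_div_iff_of_neg hn]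
          nlinarith
      obtain ⟨t, htp, htn⟩ := exists_between_bounds av bv (fun p => s p.1) (fun n => s n.1) hcmp
      refine ⟨Fin.snoc x' t, fun i => ?_⟩
      rw [hdot]
      rcases lt_trichotomy (coef i) 0 with hneg | hzero | hpos
      · have := htn ⟨i, hneg⟩
        by_cases hsi : s i = true
        · rw [if_pos hsi]; rw [if_pos hsi] at this
          rw [hbv, lt_div_iff_of_neg hneg] at this
          nlinarith
        · rw [if_neg hsi]; rw [if_neg hsi] at this
          rw [hbv, le_div_iff_of_neg hneg] at this
          nlinarith
      · have hx := hx' (Sum.inl ⟨i, hzero⟩)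
        simp only [hu, hs', Sum.elim_inl] at hx
        rw [hzero, zero_mul, add_zero]
        exact hx
      · have := htp ⟨i, hpos⟩
        by_cases hsi : s i = true
        · rw [if_pos hsi]; rw [if_pos hsi] at this
          rw [hav, div_lt_iff₀ hpos] at this
          nlinarith
        · rw [if_neg hsi]; rw [if_neg hsi] at this
          rw [hav, div_le_iff₀ hpos] at this
          nlinarith
    · -- certificate case: pull back the dual certificate
      right
      set w : ι → ℚ := fun i =>
        if h0 : coef i = 0 then w' (Sum.inl ⟨i, h0⟩)
        else if hp : 0 < coef i then
          ∑ n : {j // coef j < 0}, (-coef n.1) * w' (Sum.inr (⟨i, hp⟩, n))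
        else
          ∑ p : {j // 0 < coef j},
            coef p.1 * w' (Sum.inr (p, ⟨i, lt_of_le_of_ne (not_lt.mp hp) h0⟩)) with hwdef
      have hwZ : ∀ z : {i // coef i = 0}, w z.1 = w' (Sum.inl z) := by
        intro z; simp only [hwdef, dif_pos z.2]
      have hwP : ∀ p : {i // 0 < coef i},
          w p.1 = ∑ n : {j // coef j < 0}, (-coef n.1) * w' (Sum.inr (p, n)) := by
        intro p; simp only [hwdef, dif_neg p.2.ne', dif_pos p.2]
      have hwN : ∀ n : {i // coef i < 0},
          w n.1 = ∑ p : {j // 0 < coef j}, coef p.1 * w' (Sum.inr (p, n)) := by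
        intro n; simp only [hwdef, dif_neg (ne_of_lt n.2), dif_neg (not_lt.mpr n.2.le)]
      refine ⟨w, ?_, ?_, ?_⟩
      · -- nonnegativity
        intro i
        rcases lt_trichotomy (coef i) 0 with hneg | hzero | hpos
        · rw [hwN ⟨i, hneg⟩]
          exact Finset.sum_nonneg fun p _ => mul_nonneg p.2.le (hw0 _)
        · rw [hwZ ⟨i, hzero⟩]; exact hw0 _
        · rw [hwP ⟨i, hpos⟩]
          exact Finset.sum_nonneg fun n _ => mul_nonneg (by linarith [n.2]) (hw0 _)
      · -- strict index
        rcases j0 with z | ⟨p, n⟩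
        · exact ⟨z.1, hj0s, by rw [hwZ z]; exact hj0p⟩
        · have hor : s p.1 = true ∨ s n.1 = true := by
            simpa [hs'] using hj0s
          rcases hor with hsp | hsn
          · refine ⟨p.1, hsp, ?_⟩
            rw [hwP p]
            refine Finset.sum_pos' (fun m _ => mul_nonneg (by linarith [m.2]) (hw0 _))
              ⟨n, Finset.mem_univ n, ?_⟩
            have : (0:ℚ) < -coef n.1 := by linarith [n.2]
            exact mul_pos this hj0p
          · refine ⟨n.1, hsn, ?_⟩
            rw [hwN n]
            refine Finset.sum_pos' (fun m _ => mul_nonneg m.2.le (hw0 _))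
              ⟨p, Finset.mem_univ p, mul_pos p.2 hj0p⟩
      · -- the sum vanishes
        set VV : ι' → (Fin (d+1) → ℚ) := Sum.elim (fun z => v z.1)
          (fun pn => coef pn.1.1 • v pn.2.1 + (-coef pn.2.1) • v pn.1.1) with hVV
        have hsplit : ∑ i, w i • v i = ∑ j : ι', w' j • VV j := by
          rw [sum_trichotomy coef (fun i => w i • v i), Fintype.sum_sum_type]
          congr 1
          · exact Finset.sum_congr rfl fun z _ => by rw [hwZ z]; rfl
          · rw [Fintype.sum_prod_type]
            have hPexp : (∑ p : {i // 0 < coef i}, w p.1 • v p.1)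
                = ∑ p : {i // 0 < coef i}, ∑ n : {j // coef j < 0},
                    ((-coef n.1) * w' (Sum.inr (p, n))) • v p.1 := by
              refine Finset.sum_congr rfl fun p _ => ?_
              rw [hwP p, Finset.sum_smul]
            have hNexp : (∑ n : {i // coef i < 0}, w n.1 • v n.1)
                = ∑ p : {i // 0 < coef i}, ∑ n : {j // coef j < 0},
                    ((coef p.1) * w' (Sum.inr (p, n))) • v n.1 := by
              rw [Finset.sum_comm]
              refine Finset.sum_congr rfl fun n _ => ?_
              rw [hwN n, Finset.sum_smul]
            rw [hPexp, hNexp, ← Finset.sum_add_distrib]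
            refine Finset.sum_congr rfl fun p _ => ?_
            rw [← Finset.sum_add_distrib]
            refine Finset.sum_congr rfl fun n _ => ?_
            simp only [hVV, Sum.elim_inr, smul_add, smul_smul]
            rw [mul_comm (w' (Sum.inr (p, n))) (coef p.1),
                mul_comm (w' (Sum.inr (p, n))) (-coef n.1)]
            abel
        rw [hsplit]
        have hVu : ∀ j : ι', VV j = Fin.snoc (u j) 0 := by
          intro j
          funext k
          refine Fin.lastCases ?_ (fun m => ?_) k
          · rcases j with z | ⟨p, n⟩
            · simp only [hVV, Sum.elim_inl, Fin.snoc_last]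
              exact z.2
            · simp only [hVV, Sum.elim_inr, Fin.snoc_last, Pi.add_apply, Pi.smul_apply,
                smul_eq_mul, ← hcoef]
              ring
          · rcases j with z | ⟨p, n⟩
            · simp only [hVV, hu, Sum.elim_inl, Fin.snoc_castSucc]
              rfl
            · simp only [hVV, hu, Sum.elim_inr, Fin.snoc_castSucc, Pi.add_apply, Pi.smul_apply,
                smul_eq_mul, hv', Function.comp]
        funext k
        refine Fin.lastCases ?_ (fun m => ?_) k
        · simp only [Finset.sum_apply, Pi.smul_apply, Pi.zero_apply, smul_eq_mul]
          refine Finset.sum_eq_zero fun j _ => ?_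
          rw [hVu j, Fin.snoc_last, mul_zero]
        · have hm := congrFun hwsum m
          simp only [Finset.sum_apply, Pi.smul_apply, Pi.zero_apply, smul_eq_mul] at hm ⊢
          refine Eq.trans (Finset.sum_congr rfl fun j _ => ?_) hm
          rw [hVu j, Fin.snoc_castSucc]


lemma cast_mulVec_apply {m n : ℕ} (M : Matrix (Fin m) (Fin n) ℚ) (x : Fin n → ℚ) (i : Fin m) :
    ((M.map fun q : ℚ => (q : ℝ)) *ᵥ (fun k => ((x k : ℚ) : ℝ))) i = ((M *ᵥ x) i : ℝ) := by
  simp [Matrix.mulVec, dotProduct, Matrix.map_apply]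

lemma cast_vecMul {m n : ℕ} (M : Matrix (Fin m) (Fin n) ℚ) (v : Fin m → ℚ) :
    (fun k => ((v k : ℚ) : ℝ)) ᵥ* (M.map fun q : ℚ => (q : ℝ))
      = fun j => (((v ᵥ* M) j : ℚ) : ℝ) := by
  funext j
  simp [Matrix.vecMul, dotProduct, Matrix.map_apply]

lemma vecMul_eq_sum' {m n : ℕ} (v : Fin m → ℚ) (M : Matrix (Fin m) (Fin n) ℚ) :
    v ᵥ* M = ∑ i, v i • M i := by
  funext j
  simp [Matrix.vecMul, dotProduct, Finset.sum_apply]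

lemma motzkin_excl {a b c d : ℕ}
    (A : Matrix (Fin a) (Fin d) ℚ) (B : Matrix (Fin b) (Fin d) ℚ)
    (C : Matrix (Fin c) (Fin d) ℚ)
    (h1 : ∃ x : Fin d → ℝ,
        (∀ i, 0 < ((A.map fun q : ℚ => (q : ℝ)) *ᵥ x) i) ∧
        (∀ i, 0 ≤ ((B.map fun q : ℚ => (q : ℝ)) *ᵥ x) i) ∧
        (C.map fun q : ℚ => (q : ℝ)) *ᵥ x = 0)
    (h2 : ∃ (p : Fin a → ℤ) (q : Fin b → ℤ) (r : Fin c → ℤ),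
        (∀ i, 0 ≤ p i) ∧ p ≠ 0 ∧ (∀ i, 0 ≤ q i) ∧
        (fun i => (p i : ℚ)) ᵥ* A + (fun i => (q i : ℚ)) ᵥ* B
          + (fun i => (r i : ℚ)) ᵥ* C = 0) : False := by
  obtain ⟨x, hA, hB, hC⟩ := h1
  obtain ⟨p, q, r, hp, hpne, hq, heq⟩ := h2
  set pr : Fin a → ℝ := fun i => (((p i : ℚ)) : ℝ) with hpr
  set qr : Fin b → ℝ := fun j => (((q j : ℚ)) : ℝ) with hqr
  set rr : Fin c → ℝ := fun k => (((r k : ℚ)) : ℝ) with hrr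
  have hsum : pr ᵥ* (A.map fun q : ℚ => (q : ℝ)) + qr ᵥ* (B.map fun q : ℚ => (q : ℝ))
      + rr ᵥ* (C.map fun q : ℚ => (q : ℝ)) = 0 := by
    rw [hpr, hqr, hrr, cast_vecMul, cast_vecMul, cast_vecMul]
    funext j
    have := congrFun heq j
    simp only [Pi.add_apply, Pi.zero_apply] at this ⊢
    exact_mod_cast congrArg (fun t : ℚ => (t : ℝ)) this
  have h0 : pr ⬝ᵥ ((A.map fun q : ℚ => (q : ℝ)) *ᵥ x)
      + qr ⬝ᵥ ((B.map fun q : ℚ => (q : ℝ)) *ᵥ x)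
      + rr ⬝ᵥ ((C.map fun q : ℚ => (q : ℝ)) *ᵥ x) = 0 := by
    rw [Matrix.dotProduct_mulVec, Matrix.dotProduct_mulVec, Matrix.dotProduct_mulVec,
      ← add_dotProduct, ← add_dotProduct, hsum, zero_dotProduct]
  have hterm1 : 0 < pr ⬝ᵥ ((A.map fun q : ℚ => (q : ℝ)) *ᵥ x) := by
    obtain ⟨i0, hi0⟩ := Function.ne_iff.mp hpne
    have hi0' : 0 < p i0 := lt_of_le_of_ne (hp i0) (Ne.symm hi0)
    refine Finset.sum_pos' (fun i _ => mul_nonneg ?_ (hA i).le)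
      ⟨i0, Finset.mem_univ i0, mul_pos ?_ (hA i0)⟩
    · rw [hpr]; push_cast; exact_mod_cast hp i
    · rw [hpr]; push_cast; exact_mod_cast hi0'
  have hterm2 : 0 ≤ qr ⬝ᵥ ((B.map fun q : ℚ => (q : ℝ)) *ᵥ x) :=
    Finset.sum_nonneg fun j _ => mul_nonneg (by rw [hqr]; push_cast; exact_mod_cast hq j) (hB j)
  have hterm3 : rr ⬝ᵥ ((C.map fun q : ℚ => (q : ℝ)) *ᵥ x) = 0 := by
    rw [hC, dotProduct_zero]
  linarith

lemma exists_int_scale {ι : Type} [Fintype ι] (f : ι → ℚ) :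
    ∃ (N : ℕ) (g : ι → ℤ), 0 < N ∧ ∀ i, (g i : ℚ) = (N : ℚ) * f i := by
  classical
  refine ⟨∏ i, (f i).den, fun i => (f i).num * ∏ j ∈ Finset.univ.erase i, ((f j).den : ℤ),
    Finset.prod_pos fun i _ => (f i).den_pos, fun i => ?_⟩
  have hprod : (∏ j, ((f j).den : ℚ)) = ((f i).den : ℚ) * ∏ j ∈ Finset.univ.erase i, ((f j).den : ℚ) :=
    (Finset.mul_prod_erase Finset.univ _ (Finset.mem_univ i)).symm
  have hden : ((f i).den : ℚ) ≠ 0 := Nat.cast_ne_zero.mpr (f i).den_nz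
  have hnum : ((f i).den : ℚ) * f i = (f i).num := by
    rw [mul_comm]
    exact ((div_eq_iff hden).mp (Rat.num_div_den (f i))).symm
  push_cast
  rw [hprod]
  linear_combination (-(∏ j ∈ Finset.univ.erase i, ((f j).den : ℚ))) * hnum

/-- Motzkin's transposition theorem, rational version. -/
theorem stmt_11 {a b c d : ℕ}
    (A : Matrix (Fin a) (Fin d) ℚ) (B : Matrix (Fin b) (Fin d) ℚ)
    (C : Matrix (Fin c) (Fin d) ℚ) :
    Xor'
      (∃ x : Fin d → ℝ,
        (∀ i, 0 < ((A.map fun q : ℚ => (q : ℝ)) *ᵥ x) i) ∧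
        (∀ i, 0 ≤ ((B.map fun q : ℚ => (q : ℝ)) *ᵥ x) i) ∧
        (C.map fun q : ℚ => (q : ℝ)) *ᵥ x = 0)
      (∃ (p : Fin a → ℤ) (q : Fin b → ℤ) (r : Fin c → ℤ),
        (∀ i, 0 ≤ p i) ∧ p ≠ 0 ∧ (∀ i, 0 ≤ q i) ∧
        (fun i => (p i : ℚ)) ᵥ* A + (fun i => (q i : ℚ)) ᵥ* B
          + (fun i => (r i : ℚ)) ᵥ* C = 0) := by
  classical
  set v : (Fin a ⊕ (Fin b ⊕ (Fin c ⊕ Fin c))) → Fin d → ℚ :=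
    Sum.elim (fun i => A i) (Sum.elim (fun j => B j) (Sum.elim (fun k => C k) (fun k => -C k)))
    with hv
  set st : (Fin a ⊕ (Fin b ⊕ (Fin c ⊕ Fin c))) → Bool :=
    Sum.elim (fun _ => true) (fun _ => false) with hst
  rcases motzkin_core d v st with ⟨x, hx⟩ | ⟨w, hw0, ⟨j0, hj0s, hj0p⟩, hwsum⟩
  · -- feasible: first alternative holds
    have prop1 : ∃ x : Fin d → ℝ,
        (∀ i, 0 < ((A.map fun q : ℚ => (q : ℝ)) *ᵥ x) i) ∧
        (∀ i, 0 ≤ ((B.map fun q : ℚ => (q : ℝ)) *ᵥ x) i) ∧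
        (C.map fun q : ℚ => (q : ℝ)) *ᵥ x = 0 := by
      refine ⟨fun k => ((x k : ℚ) : ℝ), fun i => ?_, fun j => ?_, ?_⟩
      · rw [cast_mulVec_apply]
        have := hx (Sum.inl i)
        rw [hst, hv] at this
        simp only [Sum.elim_inl, if_true] at this
        exact_mod_cast this
      · rw [cast_mulVec_apply]
        have := hx (Sum.inr (Sum.inl j))
        rw [hst, hv] at this
        simp only [Sum.elim_inr, Sum.elim_inl, if_false] at this
        exact_mod_cast this
      · funext k
        rw [Pi.zero_apply, cast_mulVec_apply]
        have h1 := hx (Sum.inr (Sum.inr (Sum.inl k)))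
        have h2 := hx (Sum.inr (Sum.inr (Sum.inr k)))
        rw [hst, hv] at h1 h2
        simp only [Sum.elim_inr, Sum.elim_inl, Bool.false_eq_true, if_false,
          neg_dotProduct] at h1 h2
        have hmv : (C *ᵥ x) k = C k ⬝ᵥ x := rfl
        rw [hmv, le_antisymm (by linarith) h1]
        norm_num
    exact Or.inl ⟨prop1, fun h2 => motzkin_excl A B C prop1 h2⟩
  · -- certificate: second alternative holds
    set pQ : Fin a → ℚ := fun i => w (Sum.inl i) with hpQ
    set qQ : Fin b → ℚ := fun j => w (Sum.inr (Sum.inl j)) with hqQ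
    set rQ : Fin c → ℚ := fun k => w (Sum.inr (Sum.inr (Sum.inl k)))
      - w (Sum.inr (Sum.inr (Sum.inr k))) with hrQ
    have key : pQ ᵥ* A + qQ ᵥ* B + rQ ᵥ* C = 0 := by
      have h := hwsum
      simp only [Fintype.sum_sum_type, hv, Sum.elim_inl, Sum.elim_inr] at h
      rw [vecMul_eq_sum', vecMul_eq_sum', vecMul_eq_sum']
      have hr : (∑ k, rQ k • C k)
          = ∑ k, w (Sum.inr (Sum.inr (Sum.inl k))) • C k
            + ∑ k, w (Sum.inr (Sum.inr (Sum.inr k))) • (-C k) := by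
        rw [← Finset.sum_add_distrib]
        refine Finset.sum_congr rfl fun k _ => ?_
        rw [hrQ, sub_smul, smul_neg, sub_eq_add_neg]
      rw [hr, add_assoc]
      simp only [hpQ, hqQ]
      exact h
    obtain ⟨i0, hi0s, hi0p⟩ : ∃ i0 : Fin a, st (Sum.inl i0) = true ∧ 0 < w (Sum.inl i0) := by
      rcases j0 with i | j | k | k
      · exact ⟨i, hj0s, hj0p⟩
      all_goals simp [hst] at hj0s
    obtain ⟨N, g, hN, hg⟩ := exists_int_scale (Sum.elim pQ (Sum.elim qQ rQ) :
      (Fin a ⊕ (Fin b ⊕ Fin c)) → ℚ)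
    have hNQ : (0:ℚ) < (N:ℚ) := by exact_mod_cast hN
    set p : Fin a → ℤ := fun i => g (Sum.inl i) with hp
    set q : Fin b → ℤ := fun j => g (Sum.inr (Sum.inl j)) with hq
    set r : Fin c → ℤ := fun k => g (Sum.inr (Sum.inr k)) with hr
    have hpcast : ∀ i, ((p i : ℤ) : ℚ) = (N : ℚ) * pQ i := fun i => hg (Sum.inl i)
    have hqcast : ∀ j, ((q j : ℤ) : ℚ) = (N : ℚ) * qQ j := fun j => hg (Sum.inr (Sum.inl j))
    have hrcast : ∀ k, ((r k : ℤ) : ℚ) = (N : ℚ) * rQ k := fun k => hg (Sum.inr (Sum.inr k))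
    have prop2 : ∃ (p : Fin a → ℤ) (q : Fin b → ℤ) (r : Fin c → ℤ),
        (∀ i, 0 ≤ p i) ∧ p ≠ 0 ∧ (∀ i, 0 ≤ q i) ∧
        (fun i => (p i : ℚ)) ᵥ* A + (fun i => (q i : ℚ)) ᵥ* B
          + (fun i => (r i : ℚ)) ᵥ* C = 0 := by
      refine ⟨p, q, r, fun i => ?_, ?_, fun j => ?_, ?_⟩
      · have : (0:ℚ) ≤ ((p i : ℤ) : ℚ) := by
          rw [hpcast]; exact mul_nonneg hNQ.le (hw0 _)
        exact_mod_cast this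
      · intro hz
        have h1 : ((p i0 : ℤ) : ℚ) = 0 := by rw [congrFun hz i0]; norm_num
        rw [hpcast i0] at h1
        have h2 : pQ i0 = w (Sum.inl i0) := rfl
        rw [h2] at h1
        exact absurd h1 (mul_pos hNQ hi0p).ne'
      · have : (0:ℚ) ≤ ((q j : ℤ) : ℚ) := by
          rw [hqcast]; exact mul_nonneg hNQ.le (hw0 _)
        exact_mod_cast this
      · have e1 : (fun i => ((p i : ℤ) : ℚ)) = (N : ℚ) • pQ := funext fun i => hpcast i
        have e2 : (fun j => ((q j : ℤ) : ℚ)) = (N : ℚ) • qQ := funext fun j => hqcast j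
        have e3 : (fun k => ((r k : ℤ) : ℚ)) = (N : ℚ) • rQ := funext fun k => hrcast k
        rw [e1, e2, e3, Matrix.smul_vecMul, Matrix.smul_vecMul, Matrix.smul_vecMul,
          ← smul_add, ← smul_add, key, smul_zero]
    exact Or.inr ⟨prop2, fun h1 => motzkin_excl A B C h1 prop2⟩
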